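/- Let 0 < C1 ≤ C2, θ ∈ (0,1) and η > 0 be real constants. Let ω, g, H : [0,∞) → ℝ be nonnegative functions, and let F : [0,∞) → ℝ be continuous on [0,∞) and differentiable on (0,∞), satisfying C1·H(t) − g(t) ≤ F(t) ≤ C2·H(t) + g(t) for all t ≥ 0 and the differential inequality F′(t) + η·F(t) ≤ ω(t)·H(t)^θ + g(t) for all t > 0. Assume in addition that ω and g are monotonically decreasing (antitone) on [0,∞). Then there exists a constant C > 0, depending only on C1, C2, θ and η, such that for all t ≥ 0: F(t) ≤ C·[ max(F(0),0)·exp(−ηt/2) + ( η^{−1/(1−θ)}·ω(0)^{1/(1−θ)} + (1 + 1/η)·g(0) )·exp(−ηt/8) + η^{−1/(1−θ)}·ω(t/2)^{1/(1−θ)} + (1 + 1/η)·g(t/2) ]. -/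

import Mathlib

set_option maxHeartbeats 1000000

lemma gronwall_const_step (η : ℝ) (hη : 0 < η) (F : ℝ → ℝ) (a b M : ℝ)
    (h0a : 0 ≤ a) (hab : a ≤ b) (hM : 0 ≤ M)
    (hcont : ContinuousOn F (Set.Icc a b))
    (hdiff : ∀ t > (0:ℝ), DifferentiableAt ℝ F t)
    (hineq : ∀ s ∈ Set.Ioo a b, deriv F s + η / 2 * F s ≤ M) :
    F b ≤ F a * Real.exp (-(η/2) * (b - a)) + 2 * M / η := by
  set K := 2 * M / η with hK
  have hK0 : 0 ≤ K := by positivity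
  set G : ℝ → ℝ := fun s => Real.exp (η/2 * s) * (F s - K) with hG
  have hint : interior (Set.Icc a b) = Set.Ioo a b := interior_Icc
  have hders : ∀ s ∈ Set.Ioo a b, HasDerivAt G
      (η/2 * Real.exp (η/2 * s) * (F s - K) + Real.exp (η/2 * s) * (deriv F s)) s := by
    intro s hs
    have hs0 : 0 < s := lt_of_le_of_lt h0a hs.1
    have hF : HasDerivAt F (deriv F s) s := (hdiff s hs0).hasDerivAt
    have hE : HasDerivAt (fun s : ℝ => Real.exp (η/2 * s)) (η/2 * Real.exp (η/2 * s)) s := by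
      have h1 : HasDerivAt (fun s : ℝ => η/2 * s) (η/2) s := by
        simpa using (hasDerivAt_id s).const_mul (η/2)
      simpa [mul_comm] using h1.exp
    have := hE.mul (hF.sub_const K)
    rw [hG]
    exact this
  have hanti : AntitoneOn G (Set.Icc a b) := by
    apply antitoneOn_of_deriv_nonpos (convex_Icc a b)
    · exact ((Real.continuous_exp.comp (continuous_const.mul continuous_id)).continuousOn).mul
        (hcont.sub continuousOn_const)
    · rw [hint]; intro s hs; exact (hders s hs).differentiableAt.differentiableWithinAt
    · rw [hint]; intro s hs
      rw [(hders s hs).deriv]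
      have h1 := hineq s hs
      have h2 : (0:ℝ) < Real.exp (η/2 * s) := Real.exp_pos _
      have hKη : η/2 * K = M := by rw [hK]; field_simp
      nlinarith [mul_le_mul_of_nonneg_left h1 h2.le]
  have hGba : G b ≤ G a := hanti (Set.left_mem_Icc.2 hab) (Set.right_mem_Icc.2 hab) hab
  set E := Real.exp (-(η/2) * (b - a)) with hEdef
  have hEeq : Real.exp (η/2 * a) = E * Real.exp (η/2 * b) := by
    rw [hEdef, ← Real.exp_add]; ring_nf
  have hE0 : 0 < E := Real.exp_pos _
  have hE1 : E ≤ 1 := by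
    rw [hEdef, Real.exp_le_one_iff]; nlinarith
  have hb0 : 0 < Real.exp (η/2 * b) := Real.exp_pos _
  have h3 : F b - K ≤ E * (F a - K) := by
    have h4 : Real.exp (η/2 * b) * (F b - K) ≤ Real.exp (η/2 * b) * (E * (F a - K)) := by
      have := hGba
      simp only [hG] at this
      rw [hEeq] at this
      linarith [this]
    exact (mul_le_mul_iff_right₀ hb0).mp h4
  nlinarith [mul_nonneg hE0.le hK0]

lemma young_absorb {θ lam w X : ℝ} (hθ1 : 0 < θ) (hθ2 : θ < 1) (hlam : 0 < lam)
    (hw : 0 ≤ w) (hX : 0 ≤ X) :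
    w * X ^ θ ≤ θ * lam * X + (1-θ) * lam ^ (-(θ/(1-θ))) * w ^ (1/(1-θ)) := by
  have h1θ : 0 < 1 - θ := by linarith
  have hpq : Real.HolderConjugate (1/θ) (1/(1-θ)) := by
    rw [Real.holderConjugate_iff]; constructor
    · rw [lt_div_iff₀ hθ1]; linarith
    · rw [one_div, one_div, inv_inv, inv_inv]; ring
  have key := Real.young_inequality_of_nonneg (a := (lam*X)^θ) (b := w * lam^(-θ))
    (by positivity) (by positivity) hpq
  have e1 : (lam*X)^θ * (w * lam^(-θ)) = w * X ^ θ := by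
    rw [Real.mul_rpow hlam.le hX]
    have h : lam ^ θ * lam ^ (-θ) = 1 := by
      rw [← Real.rpow_add hlam]; simp
    calc lam ^ θ * X ^ θ * (w * lam ^ (-θ))
        = w * X ^ θ * (lam ^ θ * lam ^ (-θ)) := by ring
      _ = w * X ^ θ := by rw [h, mul_one]
  have e2 : ((lam*X)^θ) ^ (1/θ) / (1/θ) = θ * lam * X := by
    rw [← Real.rpow_mul (by positivity), mul_one_div, div_self hθ1.ne', Real.rpow_one]
    field_simp
  have e3 : (w * lam^(-θ)) ^ (1/(1-θ)) / (1/(1-θ))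
      = (1-θ) * lam ^ (-(θ/(1-θ))) * w ^ (1/(1-θ)) := by
    rw [Real.mul_rpow hw (by positivity), ← Real.rpow_mul hlam.le]
    rw [show -θ * (1/(1-θ)) = -(θ/(1-θ)) by ring]
    field_simp
  rw [e1, e2, e3] at key
  exact key

/-- Generalized Grönwall inequality with relaxation, monotone data: decay bound on `F`. -/
theorem gronwall_relaxation_monotone_F_decay
    (C1 C2 θ η : ℝ) (hC1 : 0 < C1) (hC12 : C1 ≤ C2) (hθ : θ ∈ Set.Ioo (0:ℝ) 1)
    (hη : 0 < η) :
    ∃ C > (0:ℝ), ∀ (ω g H F : ℝ → ℝ),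
      (∀ t ≥ (0:ℝ), 0 ≤ ω t) →
      (∀ t ≥ (0:ℝ), 0 ≤ g t) →
      (∀ t ≥ (0:ℝ), 0 ≤ H t) →
      ContinuousOn F (Set.Ici 0) →
      (∀ t > (0:ℝ), DifferentiableAt ℝ F t) →
      (∀ t ≥ (0:ℝ), C1 * H t - g t ≤ F t) →
      (∀ t ≥ (0:ℝ), F t ≤ C2 * H t + g t) →
      (∀ t > (0:ℝ), deriv F t + η * F t ≤ ω t * H t ^ θ + g t) →
      AntitoneOn ω (Set.Ici 0) →
      AntitoneOn g (Set.Ici 0) →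
      ∀ t ≥ (0:ℝ),
        F t ≤ C * (max (F 0) 0 * Real.exp (-η * t / 2)
          + (η ^ (-(1/(1-θ))) * ω 0 ^ (1/(1-θ)) + (1 + 1/η) * g 0) * Real.exp (-η * t / 8)
          + η ^ (-(1/(1-θ))) * ω (t/2) ^ (1/(1-θ)) + (1 + 1/η) * g (t/2)) := by
  obtain ⟨hθ1, hθ2⟩ := hθ
  have h1θ : 0 < 1 - θ := by linarith
  set q : ℝ := 1/(1-θ) with hq
  have hq0 : 0 < q := by positivity
  set lam : ℝ := η * C1 / (2 * θ) with hlam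
  have hlam0 : 0 < lam := by positivity
  set c : ℝ := (1-θ) * lam ^ (-(θ/(1-θ))) with hc
  have hc0 : 0 < c := by positivity
  set c2 : ℝ := 2 * (1-θ) * (C1/(2*θ)) ^ (-(θ/(1-θ))) with hc2
  have hc20 : 0 < c2 := by positivity
  set C : ℝ := max 2 c2 with hC
  have hC2 : (2:ℝ) ≤ C := le_max_left _ _
  have hCc2 : c2 ≤ C := le_max_right _ _
  have hC0 : (0:ℝ) < C := by linarith
  -- relation: 2 * c / η = c2 * η ^ (-q)
  have hkey : 2 * c / η = c2 * η ^ (-q) := by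
    have hsplit : lam ^ (-(θ/(1-θ))) = η ^ (-(θ/(1-θ))) * (C1/(2*θ)) ^ (-(θ/(1-θ))) := by
      rw [show lam = η * (C1/(2*θ)) by rw [hlam]; ring,
        Real.mul_rpow hη.le (by positivity)]
    have hexp : η ^ (-(θ/(1-θ))) / η = η ^ (-q) := by
      rw [show -q = -(θ/(1-θ)) - 1 by rw [hq]; field_simp; ring,
        Real.rpow_sub hη, Real.rpow_one]
    rw [hc, hsplit, hc2]
    field_simp
    rw [← hexp]
    field_simp
  refine ⟨C, hC0, ?_⟩
  intro ω g H F hω hg hH hFc hFd hlow hup hode hωa hga t ht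
  set M : ℝ → ℝ := fun s => (1 + η/2) * g s + c * ω s ^ q with hM
  have hM0 : ∀ s ≥ (0:ℝ), 0 ≤ M s := by
    intro s hs
    have h1 := hg s hs
    have h2 : (0:ℝ) ≤ ω s ^ q := Real.rpow_nonneg (hω s hs) q
    have : (0:ℝ) ≤ c * ω s ^ q := mul_nonneg hc0.le h2
    simp only [hM]; nlinarith
  have hMmono : ∀ a ≥ (0:ℝ), ∀ s, a ≤ s → M s ≤ M a := by
    intro a ha s has
    have hs : (0:ℝ) ≤ s := le_trans ha has
    have h1 : g s ≤ g a := hga ha hs has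
    have h2 : ω s ^ q ≤ ω a ^ q :=
      Real.rpow_le_rpow (hω s hs) (hωa ha hs has) hq0.le
    have h3 : c * ω s ^ q ≤ c * ω a ^ q := mul_le_mul_of_nonneg_left h2 hc0.le
    simp only [hM]; nlinarith
  -- pointwise differential inequality
  have hptw : ∀ s > (0:ℝ), deriv F s + η / 2 * F s ≤ M s := by
    intro s hs
    have h1 := hode s hs
    have h2 := young_absorb (θ := θ) (lam := lam) hθ1 hθ2 hlam0 (hω s hs.le) (hH s hs.le)
    have h3 : θ * lam = η * C1 / 2 := by rw [hlam]; field_simp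
    have h4 : C1 * H s ≤ F s + g s := by linarith [hlow s hs.le]
    have h5 : θ * lam * H s ≤ η/2 * (F s + g s) := by
      rw [h3]
      nlinarith [hH s hs.le]
    simp only [hM]
    have h6 : (1-θ) * lam ^ (-(θ/(1-θ))) * ω s ^ (1/(1-θ)) = c * ω s ^ q := by
      rw [hc, hq]
    nlinarith [h2, h6.le]
  -- two Grönwall steps
  have ht2 : (0:ℝ) ≤ t/2 := by linarith
  have step1 : F (t/2) ≤ F 0 * Real.exp (-(η/2) * (t/2 - 0)) + 2 * M 0 / η := by
    apply gronwall_const_step η hη F 0 (t/2) (M 0) le_rfl ht2 (hM0 0 le_rfl)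
      (hFc.mono Set.Icc_subset_Ici_self) hFd
    intro s hs
    exact le_trans (hptw s hs.1) (hMmono 0 le_rfl s hs.1.le)
  have step2 : F t ≤ F (t/2) * Real.exp (-(η/2) * (t - t/2)) + 2 * M (t/2) / η := by
    apply gronwall_const_step η hη F (t/2) t (M (t/2)) ht2 (by linarith) (hM0 _ ht2)
      (hFc.mono (le_trans Set.Icc_subset_Ici_self (Set.Ici_subset_Ici.mpr ht2))) hFd
    intro s hs
    exact le_trans (hptw s (lt_of_le_of_lt ht2 hs.1)) (hMmono (t/2) ht2 s hs.1.le)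
  set E : ℝ := Real.exp (-(η/2) * (t/2)) with hE
  have hE0 : 0 < E := Real.exp_pos _
  have hEE : E * E = Real.exp (-η * t / 2) := by
    rw [hE, ← Real.exp_add]; ring_nf
  have hE8 : E ≤ Real.exp (-η * t / 8) := by
    rw [hE]; apply Real.exp_le_exp.mpr; linarith [mul_nonneg hη.le ht]
  have hE8pos : (0:ℝ) < Real.exp (-η * t / 8) := Real.exp_pos _
  have hstep1' : F (t/2) ≤ F 0 * E + 2 * M 0 / η := by
    have e : Real.exp (-(η/2) * (t/2 - 0)) = E := by rw [hE]; norm_num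
    rw [← e]; exact step1
  have hstep2' : F t ≤ F (t/2) * E + 2 * M (t/2) / η := by
    have e : Real.exp (-(η/2) * (t - t/2)) = E := by rw [hE]; congr 1; ring
    rw [← e]; exact step2
  have hcomb : F t ≤ F 0 * (E * E) + (2 * M 0 / η) * E + 2 * M (t/2) / η := by
    nlinarith [mul_le_mul_of_nonneg_right hstep1' hE0.le]
  -- bound each piece
  set A : ℝ := max (F 0) 0 with hA
  set P : ℝ := η ^ (-q) * ω 0 ^ q with hP
  set Q : ℝ := (1 + 1/η) * g 0 with hQ
  have hP0 : 0 ≤ P := mul_nonneg (Real.rpow_nonneg hη.le _) (Real.rpow_nonneg (hω 0 le_rfl) _)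
  have hQ0 : 0 ≤ Q := mul_nonneg (by positivity) (hg 0 le_rfl)
  have hMC : ∀ s, 0 ≤ s → 2 * M s / η ≤
      C * (η ^ (-q) * ω s ^ q + (1 + 1/η) * g s) := by
    intro s hs
    have hgs := hg s hs
    have hωs : 0 ≤ ω s ^ q := Real.rpow_nonneg (hω s hs) q
    have e1 : 2 * M s / η = (2/η + 1) * g s + (2 * c / η) * ω s ^ q := by
      simp only [hM]; field_simp
    have e2 : (2/η + 1) * g s ≤ C * ((1 + 1/η) * g s) := by
      have h1 : 2/η + 1 ≤ C * (1 + 1/η) := by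
        have h2 : 2 * (1 + 1/η) = 2 + 2/η := by ring
        have h3 : (2:ℝ) * (1 + 1/η) ≤ C * (1 + 1/η) := by
          apply mul_le_mul_of_nonneg_right hC2; positivity
        linarith
      calc (2/η + 1) * g s ≤ (C * (1 + 1/η)) * g s := mul_le_mul_of_nonneg_right h1 hgs
        _ = C * ((1 + 1/η) * g s) := by ring
    have e3 : (2 * c / η) * ω s ^ q ≤ C * (η ^ (-q) * ω s ^ q) := by
      rw [hkey]
      have h1 : c2 * (η ^ (-q) * ω s ^ q) ≤ C * (η ^ (-q) * ω s ^ q) := by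
        apply mul_le_mul_of_nonneg_right hCc2
        exact mul_nonneg (Real.rpow_nonneg hη.le _) hωs
      calc c2 * η ^ (-q) * ω s ^ q = c2 * (η ^ (-q) * ω s ^ q) := by ring
        _ ≤ C * (η ^ (-q) * ω s ^ q) := h1
    rw [e1]
    linarith [e2, e3]
  have hp1 : F 0 * (E * E) ≤ C * (A * Real.exp (-η * t / 2)) := by
    rw [hEE]
    have h1 : F 0 ≤ A := le_max_left _ _
    have h2 : 0 ≤ A := le_max_right _ _
    have h3 : 0 ≤ Real.exp (-η * t / 2) := (Real.exp_pos _).le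
    nlinarith [mul_le_mul_of_nonneg_right h1 h3, mul_nonneg h2 h3]
  have hp2 : (2 * M 0 / η) * E ≤ C * ((P + Q) * Real.exp (-η * t / 8)) := by
    have h1 : 2 * M 0 / η ≤ C * (P + Q) := by
      have h0 := hMC 0 le_rfl
      rw [hP, hQ]; linarith [h0]
    have h2 : 0 ≤ 2 * M 0 / η := by
      have := hM0 0 le_rfl; positivity
    have hPQ : 0 ≤ P + Q := by linarith
    calc (2 * M 0 / η) * E ≤ (C * (P + Q)) * E := mul_le_mul_of_nonneg_right h1 hE0.le
      _ ≤ (C * (P + Q)) * Real.exp (-η * t / 8) := by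
          apply mul_le_mul_of_nonneg_left hE8; positivity
      _ = C * ((P + Q) * Real.exp (-η * t / 8)) := by ring
  have hp3 : 2 * M (t/2) / η ≤
      C * (η ^ (-q) * ω (t/2) ^ q + (1 + 1/η) * g (t/2)) := hMC (t/2) ht2
  have expand : C * (A * Real.exp (-η * t / 2) + (P + Q) * Real.exp (-η * t / 8)
      + η ^ (-q) * ω (t/2) ^ q + (1 + 1/η) * g (t/2))
      = C * (A * Real.exp (-η * t / 2)) + C * ((P + Q) * Real.exp (-η * t / 8))
      + C * (η ^ (-q) * ω (t/2) ^ q + (1 + 1/η) * g (t/2)) := by ring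
  calc F t ≤ F 0 * (E * E) + (2 * M 0 / η) * E + 2 * M (t/2) / η := hcomb
    _ ≤ C * (A * Real.exp (-η * t / 2)) + C * ((P + Q) * Real.exp (-η * t / 8))
        + C * (η ^ (-q) * ω (t/2) ^ q + (1 + 1/η) * g (t/2)) := by linarith
    _ = C * (A * Real.exp (-η * t / 2) + (P + Q) * Real.exp (-η * t / 8)
        + η ^ (-q) * ω (t/2) ^ q + (1 + 1/η) * g (t/2)) := expand.symm
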